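/- Let U = ℤ, let L_∞ = ℤ and, for each i ∈ ℤ, let L_i = {n ∈ ℤ : n ≥ -i}, and let C = {L_∞} ∪ {L_i : i ∈ ℤ}. Then no algorithm exhaustively generates in the limit from C. -/
import Mathlib


/-!
STATEMENT 3: Let U = ℤ, L_∞ = ℤ and, for i ∈ ℤ, L_i = {n : ℤ | n ≥ -i}, and let
C = {L_∞} ∪ {L_i : i ∈ ℤ}.  Then no algorithm exhaustively generates in the limit
from C.

An exhaustive generating algorithm maps each finite input prefix (a list) to a
generator G_t : ℕ → U.  `ZltSet` is the set of first outputs of the generators of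
steps 1, ..., t-1, and `ZgeSet` is the set of all strings the generator at step t
would produce in generate-only mode.
-/

/-- `x` is an enumeration of the language `K`. -/
def IsEnumerationOf {U : Type} (K : Set U) (x : ℕ → U) : Prop :=
  (∀ t, x t ∈ K) ∧ ∀ w ∈ K, ∃ t, x t = w

/-- The set `S_t` of distinct strings among the first `t` inputs. -/
def seen {U : Type} (x : ℕ → U) (t : ℕ) : Set U := x '' {i | i < t}

/-- The input prefix `(x_1, ..., x_t)` as a list. -/
def inputList {U : Type} (x : ℕ → U) (t : ℕ) : List U :=
  List.ofFn (fun i : Fin t => x i)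

/-- `Z_{<t}`: the distinct strings among `G_1(1), ..., G_{t-1}(1)`, i.e. the first
outputs of the generators produced at steps `1 ≤ s < t`. -/
def ZltSet {U : Type} (A : List U → ℕ → U) (x : ℕ → U) (t : ℕ) : Set U :=
  (fun s => A (inputList x s) 0) '' {s | 1 ≤ s ∧ s < t}

/-- `Z_{≥t}`: the distinct strings in the sequence `G_t(1), G_t(2), ...` produced by
the generator of step `t` in generate-only mode. -/
def ZgeSet {U : Type} (A : List U → ℕ → U) (x : ℕ → U) (t : ℕ) : Set U :=
  Set.range (A (inputList x t))

/-- The algorithm `A` exhaustively generates in the limit from the collection `C`. -/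
def ExhaustivelyGenerates {U : Type} (A : List U → ℕ → U) (C : Set (Set U)) : Prop :=
  ∀ K ∈ C, ∀ x : ℕ → U, IsEnumerationOf K x →
    ∃ tstar : ℕ, ∀ t : ℕ, tstar ≤ t →
      (ZgeSet A x t \ K).Finite ∧ K ⊆ seen x t ∪ ZltSet A x t ∪ ZgeSet A x t

namespace EGLB

/-- The language `L_i = {n : ℤ | n ≥ -i}`. -/
def L (i : ℤ) : Set ℤ := {n : ℤ | -i ≤ n}

/-- The collection `C`. -/
def Cset : Set (Set ℤ) :=
  insert (Set.univ : Set ℤ) (Set.range fun i : ℤ => {n : ℤ | -i ≤ n})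

lemma L_mem_Cset (i : ℤ) : L i ∈ Cset := Set.mem_insert_of_mem _ ⟨i, rfl⟩

/-- Canonical continuation of a prefix `p` into an enumeration of `L i`. -/
def ext (p : List ℤ) (i : ℤ) (s : ℕ) : ℤ :=
  if s < p.length then max (p.getD s 0) (-i) else -i + ((s : ℤ) - (p.length : ℤ))

lemma ext_ge (p : List ℤ) (i : ℤ) (s : ℕ) : -i ≤ ext p i s := by
  unfold ext
  split
  · exact le_max_right _ _
  · rename_i h
    have : (p.length : ℤ) ≤ (s : ℤ) := by exact_mod_cast Nat.le_of_not_lt h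
    omega

lemma ext_agree (p : List ℤ) (i : ℤ) (hp : ∀ a ∈ p, -i ≤ a) (s : ℕ) (hs : s < p.length) :
    ext p i s = p.getD s 0 := by
  unfold ext
  rw [if_pos hs]
  refine max_eq_left (hp _ ?_)
  rw [List.getD_eq_getElem _ _ hs]
  exact List.getElem_mem _

lemma ext_tail (p : List ℤ) (i : ℤ) (s : ℕ) (hs : p.length ≤ s) :
    ext p i s = -i + ((s : ℤ) - (p.length : ℤ)) := by
  unfold ext
  rw [if_neg (by omega)]

lemma ext_enum (p : List ℤ) (i : ℤ) : IsEnumerationOf (L i) (ext p i) := by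
  constructor
  · exact fun s => ext_ge p i s
  · intro w hw
    have hw' : -i ≤ w := hw
    refine ⟨p.length + (w + i).toNat, ?_⟩
    rw [ext_tail _ _ _ (Nat.le_add_right _ _)]
    have : ((w + i).toNat : ℤ) = w + i := Int.toNat_of_nonneg (by omega)
    push_cast
    omega

/-- The key diagonalization step: given a prefix `p` with entries in `L i`, there is a
time `t` (large enough) and an element `m < -i` missed by everything at time `t`. -/
lemma key (A : List ℤ → ℕ → ℤ) (H : ExhaustivelyGenerates A Cset)
    (p : List ℤ) (i : ℤ) (k : ℕ) :
    ∃ tm : ℕ × ℤ,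
      p.length + (k + i).toNat + 1 ≤ tm.1 ∧ tm.2 < -i ∧
      tm.2 ∉ seen (ext p i) tm.1 ∪ ZltSet A (ext p i) tm.1 ∪ ZgeSet A (ext p i) tm.1 := by
  obtain ⟨ts, hts⟩ := H (L i) (L_mem_Cset i) (ext p i) (ext_enum p i)
  set t : ℕ := max ts (p.length + (k + i).toNat + 1) with ht
  obtain ⟨hfin, -⟩ := hts t (le_max_left _ _)
  set B : Set ℤ := seen (ext p i) t ∪ ZltSet A (ext p i) t ∪ ZgeSet A (ext p i) t with hB
  have hBfin : (B ∩ Set.Iio (-i)).Finite := by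
    have h1 : (seen (ext p i) t).Finite := Set.Finite.image _ (Set.finite_Iio t)
    have h2 : (ZltSet A (ext p i) t).Finite := by
      refine Set.Finite.image _ (Set.Finite.subset (Set.finite_Iio t) ?_)
      intro s hs; exact hs.2
    have h3 : (ZgeSet A (ext p i) t ∩ Set.Iio (-i)).Finite := by
      refine hfin.subset ?_
      rintro n ⟨hn, hn'⟩
      exact ⟨hn, by simpa [L] using not_le.mpr hn'⟩
    refine Set.Finite.subset (h1.union (h2.union h3)) ?_
    rintro n ⟨hn, hn'⟩
    rcases hn with (hn | hn) | hn
    · exact Or.inl hn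
    · exact Or.inr (Or.inl hn)
    · exact Or.inr (Or.inr ⟨hn, hn'⟩)
  have hinf : (Set.Iio (-i) \ (B ∩ Set.Iio (-i))).Infinite :=
    (Set.Iio_infinite (-i)).diff hBfin
  obtain ⟨m, hm1, hm2⟩ := hinf.nonempty
  exact ⟨⟨t, m⟩, le_max_right _ _, hm1, fun h => hm2 ⟨h, hm1⟩⟩

/-- The recursively constructed sequence of (prefix, index) pairs. -/
noncomputable def PP (A : List ℤ → ℕ → ℤ) (H : ExhaustivelyGenerates A Cset)
    : ℕ → List ℤ × ℤ
  | 0 => ([], 0)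
  | k + 1 =>
    let p := (PP A H k).1
    let i := (PP A H k).2
    let tm := Classical.choose (key A H p i k)
    (inputList (ext p i) tm.1 ++ [tm.2], -tm.2)

noncomputable def pl (A : List ℤ → ℕ → ℤ) (H : ExhaustivelyGenerates A Cset)
    (k : ℕ) : List ℤ := (PP A H k).1
noncomputable def il (A : List ℤ → ℕ → ℤ) (H : ExhaustivelyGenerates A Cset)
    (k : ℕ) : ℤ := (PP A H k).2
noncomputable def tl (A : List ℤ → ℕ → ℤ) (H : ExhaustivelyGenerates A Cset)
    (k : ℕ) : ℕ := (Classical.choose (key A H (pl A H k) (il A H k) k)).1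
noncomputable def ml (A : List ℤ → ℕ → ℤ) (H : ExhaustivelyGenerates A Cset)
    (k : ℕ) : ℤ := (Classical.choose (key A H (pl A H k) (il A H k) k)).2
noncomputable def el (A : List ℤ → ℕ → ℤ) (H : ExhaustivelyGenerates A Cset)
    (k : ℕ) : ℕ → ℤ := ext (pl A H k) (il A H k)

lemma spec (A : List ℤ → ℕ → ℤ) (H : ExhaustivelyGenerates A Cset)
    (k : ℕ) :
    (pl A H k).length + (k + il A H k).toNat + 1 ≤ tl A H k ∧ ml A H k < -(il A H k) ∧
      ml A H k ∉ seen (el A H k) (tl A H k) ∪ ZltSet A (el A H k) (tl A H k) ∪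
        ZgeSet A (el A H k) (tl A H k) :=
  Classical.choose_spec (key A H (pl A H k) (il A H k) k)

lemma PP_succ (A : List ℤ → ℕ → ℤ) (H : ExhaustivelyGenerates A Cset)
    (k : ℕ) :
    pl A H (k + 1) = inputList (el A H k) (tl A H k) ++ [ml A H k] ∧
      il A H (k + 1) = -(ml A H k) := by
  constructor <;> simp [pl, il, el, tl, ml, PP]

lemma len_succ (A : List ℤ → ℕ → ℤ) (H : ExhaustivelyGenerates A Cset)
    (k : ℕ) : (pl A H (k + 1)).length = tl A H k + 1 := by
  rw [(PP_succ A H k).1]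
  simp [inputList]

lemma tl_ge (A : List ℤ → ℕ → ℤ) (H : ExhaustivelyGenerates A Cset)
    (k : ℕ) : (pl A H k).length + 1 ≤ tl A H k := by
  have := (spec A H k).1; omega

lemma len_lt (A : List ℤ → ℕ → ℤ) (H : ExhaustivelyGenerates A Cset)
    (k : ℕ) : (pl A H k).length + 2 ≤ (pl A H (k + 1)).length := by
  rw [len_succ]; have := tl_ge A H k; omega

lemma len_mono (A : List ℤ → ℕ → ℤ) (H : ExhaustivelyGenerates A Cset)
    : ∀ {k k' : ℕ}, k ≤ k' → (pl A H k).length ≤ (pl A H k').length := by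
  intro k k' h
  induction k' with
  | zero => simp_all
  | succ n ih =>
    rcases Nat.lt_or_ge k (n+1) with h' | h'
    · have := ih (by omega)
      have := len_lt A H n
      omega
    · have : k = n + 1 := by omega
      simp [this]

lemma len_ge (A : List ℤ → ℕ → ℤ) (H : ExhaustivelyGenerates A Cset)
    (k : ℕ) : k ≤ (pl A H k).length := by
  induction k with
  | zero => simp
  | succ n ih => have := len_lt A H n; omega

lemma il_mono (A : List ℤ → ℕ → ℤ) (H : ExhaustivelyGenerates A Cset)
    (k : ℕ) : il A H k + 1 ≤ il A H (k + 1) := by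
  rw [(PP_succ A H k).2]
  have := (spec A H k).2.1
  omega

lemma il_ge (A : List ℤ → ℕ → ℤ) (H : ExhaustivelyGenerates A Cset)
    (k : ℕ) : (k : ℤ) ≤ il A H k := by
  induction k with
  | zero => simp [il, PP]
  | succ n ih => have := il_mono A H n; push_cast; omega

/-- Invariant: all entries of `pl k` are at least `-(il k)`. -/
lemma inv (A : List ℤ → ℕ → ℤ) (H : ExhaustivelyGenerates A Cset)
    (k : ℕ) : ∀ a ∈ pl A H k, -(il A H k) ≤ a := by
  induction k with
  | zero => intro a ha; simp [pl, PP] at ha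
  | succ n ih =>
    intro a ha
    rw [(PP_succ A H n).1] at ha
    rw [(PP_succ A H n).2]
    rcases List.mem_append.mp ha with h | h
    · simp only [inputList, List.mem_ofFn] at h
      obtain ⟨j, hj⟩ := h
      have h1 : -(il A H n) ≤ a := by rw [← hj]; exact ext_ge _ _ _
      have h2 := (spec A H n).2.1
      omega
    · simp at h; omega

lemma getD_succ (A : List ℤ → ℕ → ℤ) (H : ExhaustivelyGenerates A Cset)
    (k s : ℕ) (hs : s < tl A H k) :
    (pl A H (k + 1)).getD s 0 = el A H k s := by
  rw [(PP_succ A H k).1]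
  have hlen : s < (inputList (el A H k) (tl A H k)).length := by
    simpa [inputList] using hs
  rw [List.getD_eq_getElem _ _ (by simp [inputList]; omega : s < _)]
  rw [List.getElem_append_left hlen]
  simp [inputList]

lemma getD_step (A : List ℤ → ℕ → ℤ) (H : ExhaustivelyGenerates A Cset)
    (k s : ℕ) (hs : s < (pl A H k).length) :
    (pl A H (k + 1)).getD s 0 = (pl A H k).getD s 0 := by
  have h1 : s < tl A H k := by have := tl_ge A H k; omega
  rw [getD_succ A H k s h1]
  exact ext_agree _ _ (inv A H k) s hs

lemma getD_stable (A : List ℤ → ℕ → ℤ) (H : ExhaustivelyGenerates A Cset)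
    : ∀ {k k' : ℕ}, k ≤ k' → ∀ s < (pl A H k).length,
    (pl A H k').getD s 0 = (pl A H k).getD s 0 := by
  intro k k' h
  induction k' with
  | zero =>
    intro s hs
    have hk0 : k = 0 := by omega
    subst hk0
    rfl
  | succ n ih =>
    intro s hs
    rcases Nat.lt_or_ge k (n+1) with h' | h'
    · have hk : k ≤ n := by omega
      rw [getD_step A H n s (lt_of_lt_of_le hs (len_mono A H hk))]
      exact ih hk s hs
    · have : k = n + 1 := by omega
      subst this; rfl

/-- The diagonal enumeration. -/
noncomputable def xx (A : List ℤ → ℕ → ℤ) (H : ExhaustivelyGenerates A Cset)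
    (n : ℕ) : ℤ := (pl A H (n + 1)).getD n 0

lemma xx_eq (A : List ℤ → ℕ → ℤ) (H : ExhaustivelyGenerates A Cset)
    (k s : ℕ) (hs : s < tl A H k) : xx A H s = el A H k s := by
  rcases Nat.le_total (s + 1) (k + 1) with h | h
  · rw [xx, ← getD_stable A H h s (by have := len_ge A H (s+1); omega)]
    exact getD_succ A H k s hs
  · rw [xx, getD_stable A H h s (by rw [len_succ]; omega)]
    exact getD_succ A H k s hs

lemma inputList_xx (A : List ℤ → ℕ → ℤ) (H : ExhaustivelyGenerates A Cset)
    (k s : ℕ) (hs : s ≤ tl A H k) :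
    inputList (xx A H) s = inputList (el A H k) s := by
  unfold inputList
  congr 1
  funext j
  exact xx_eq A H k j (by have := j.isLt; omega)

lemma seen_xx (A : List ℤ → ℕ → ℤ) (H : ExhaustivelyGenerates A Cset)
    (k : ℕ) : seen (xx A H) (tl A H k) = seen (el A H k) (tl A H k) := by
  unfold seen
  apply Set.image_congr
  intro s hs
  exact xx_eq A H k s hs

lemma Zlt_xx (A : List ℤ → ℕ → ℤ) (H : ExhaustivelyGenerates A Cset)
    (k : ℕ) : ZltSet A (xx A H) (tl A H k) = ZltSet A (el A H k) (tl A H k) := by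
  unfold ZltSet
  apply Set.image_congr
  intro s hs
  rw [inputList_xx A H k s (le_of_lt hs.2)]

lemma Zge_xx (A : List ℤ → ℕ → ℤ) (H : ExhaustivelyGenerates A Cset)
    (k : ℕ) : ZgeSet A (xx A H) (tl A H k) = ZgeSet A (el A H k) (tl A H k) := by
  unfold ZgeSet
  rw [inputList_xx A H k (tl A H k) le_rfl]

lemma xx_surj (A : List ℤ → ℕ → ℤ) (H : ExhaustivelyGenerates A Cset)
    (w : ℤ) : ∃ s, xx A H s = w := by
  set k : ℕ := w.natAbs with hk
  have hik : (k : ℤ) ≤ il A H k := il_ge A H k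
  have hw1 : -(il A H k) ≤ w := by
    have : -(k : ℤ) ≤ w := by rw [hk]; omega
    omega
  have hw2 : w ≤ (k : ℤ) := by rw [hk]; omega
  set j : ℕ := (w + il A H k).toNat with hj
  have hjv : (j : ℤ) = w + il A H k := Int.toNat_of_nonneg (by omega)
  have hjle : j ≤ (k + il A H k).toNat := by omega
  refine ⟨(pl A H k).length + j, ?_⟩
  have hlt : (pl A H k).length + j < tl A H k := by
    have := (spec A H k).1; omega
  rw [xx_eq A H k _ hlt, el, ext_tail _ _ _ (Nat.le_add_right _ _)]
  push_cast
  omega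

theorem contradiction (A : List ℤ → ℕ → ℤ) (H : ExhaustivelyGenerates A Cset)
    : False := by
  obtain ⟨ts, hts⟩ := H Set.univ (Set.mem_insert _ _) (xx A H)
    ⟨fun _ => trivial, fun w _ => xx_surj A H w⟩
  have htk : ts ≤ tl A H ts := by
    have h1 := tl_ge A H ts
    have h2 := len_ge A H ts
    omega
  obtain ⟨-, hcov⟩ := hts (tl A H ts) htk
  have hm := hcov (Set.mem_univ (ml A H ts))
  rw [Set.mem_union, Set.mem_union, ← Set.mem_union, ← Set.mem_union] at hm
  rw [seen_xx, Zlt_xx, Zge_xx] at hm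
  exact (spec A H ts).2.2 hm

end EGLB

theorem exhaustive_generation_lower_bound :
    ¬ ∃ A : List ℤ → ℕ → ℤ,
      ExhaustivelyGenerates A
        (insert (Set.univ : Set ℤ) (Set.range fun i : ℤ => {n : ℤ | -i ≤ n})) := by
  rintro ⟨A, H⟩
  exact EGLB.contradiction A H
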